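/- arXiv:1902.10963 — 2 statements merged into one kernel-verified Lean document; each statement's English description precedes it below -/
import Mathlib

section
/- Let p* = inf{ f(φ) + g(ψ) : φ_π = ψ_{π,π'} for every ordered pair (π,π') with {π,π'} ∈ E }. Suppose the sequences (φ^l) ⊆ Φ and copy variables (ψ^l) satisfy: (a) residual convergence, i.e. φ^l_π − ψ^l_{π,π'} → 0 as l → ∞ for every ordered pair (π,π') with {π,π'} ∈ E; and (b) objective convergence, i.e. f(φ^l) + g(ψ^l) → p*. Then p* = min_{φ∈Φ} L_λ(φ) and L_λ(φ^l) → min_{φ∈Φ} L_λ(φ) as l → ∞. -/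
open Finset Filter

noncomputable section

open Classical

namespace Paper

/-- The adjacent transposition `sᵢ` exchanging `i` and `i+1` (`0`-indexed). -/
def adjT (r : ℕ) (i : Fin (r - 1)) : Equiv.Perm (Fin r) :=
  Equiv.swap ⟨i.1, by have := i.isLt; omega⟩ ⟨i.1 + 1, by have := i.isLt; omega⟩

/-- Kendall adjacency on `S_r` : `{π, π'} ∈ E`. -/
def KAdj (r : ℕ) (π π' : Equiv.Perm (Fin r)) : Prop :=
  ∃ i : Fin (r - 1), π' = adjT r i * π

theorem KAdj.symm {r : ℕ} {π π' : Equiv.Perm (Fin r)} (h : KAdj r π π') : KAdj r π' π := by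
  obtain ⟨i, rfl⟩ := h
  refine ⟨i, ?_⟩
  rw [← mul_assoc]
  simp [adjT, Equiv.swap_mul_self]

/-- Ordered edges of the Kendall graph. -/
def Edge (r : ℕ) : Type :=
  {p : Equiv.Perm (Fin r) × Equiv.Perm (Fin r) // KAdj r p.1 p.2}

instance (r : ℕ) : Fintype (Edge r) := by unfold Edge; infer_instance

/-- The reversed (oppositely oriented) edge. -/
def Edge.rev {r : ℕ} (e : Edge r) : Edge r := ⟨(e.1.2, e.1.1), e.2.symm⟩

/-- The simplex constraint set `Φ`. -/
def PhiSet (r : ℕ) : Set (Equiv.Perm (Fin r) → Fin (r - 1) → ℝ) :=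
  {φ | (∀ π t, 0 ≤ φ π t) ∧ ∀ π, (∑ t, φ π t) = 1}

/-- The component function `f_{π,t}` with weight `q = q_{π,t}`. -/
def fpt (q x : ℝ) : EReal :=
  if x < 0 ∨ 1 < x ∨ (x = 0 ∧ q ≠ 0) then ⊤
  else if q = 0 then 0
  else ((-(q * Real.log x) : ℝ) : EReal)

/-- The extended-real-valued function `f`. -/
def fObj (r : ℕ) (q φ : Equiv.Perm (Fin r) → Fin (r - 1) → ℝ) : EReal :=
  if ∃ π, (∑ t, φ π t) ≠ 1 then ⊤
  else ∑ π : Equiv.Perm (Fin r), ∑ t : Fin (r - 1), fpt (q π t) (φ π t)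

/-- `g(ψ) = λ Σ_{unordered edges} ‖ψ_{π,π'} - ψ_{π',π}‖₂²`
(summing over ordered edges counts every unordered edge twice). -/
def gObj (r : ℕ) (lam : ℝ) (ψ : Edge r → Fin (r - 1) → ℝ) : ℝ :=
  lam / 2 * ∑ e : Edge r, ∑ t, (ψ e t - ψ e.rev t) ^ 2

/-- `Σ_{unordered edges} (⟨y_{π,π'}, φ_π - ψ_{π,π'}⟩ + ⟨y_{π',π}, φ_{π'} - ψ_{π',π}⟩)`,
written as a sum over ordered edges. -/
def linTerm (r : ℕ) (φ : Equiv.Perm (Fin r) → Fin (r - 1) → ℝ)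
    (ψ y : Edge r → Fin (r - 1) → ℝ) : ℝ :=
  ∑ e : Edge r, ∑ t, y e t * (φ e.1.1 t - ψ e t)

/-- The unaugmented Lagrangian `L̃₀`. -/
def Ltilde (r : ℕ) (q : Equiv.Perm (Fin r) → Fin (r - 1) → ℝ) (lam : ℝ)
    (φ : Equiv.Perm (Fin r) → Fin (r - 1) → ℝ) (ψ y : Edge r → Fin (r - 1) → ℝ) : EReal :=
  fObj r q φ + ((gObj r lam ψ + linTerm r φ ψ y : ℝ) : EReal)

/-- `L⁺(φ,ψ) = sup_y L̃₀(φ,ψ,y)`. -/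
def Lplus (r : ℕ) (q : Equiv.Perm (Fin r) → Fin (r - 1) → ℝ) (lam : ℝ)
    (φ : Equiv.Perm (Fin r) → Fin (r - 1) → ℝ) (ψ : Edge r → Fin (r - 1) → ℝ) : EReal :=
  ⨆ y : Edge r → Fin (r - 1) → ℝ, Ltilde r q lam φ ψ y

/-- `L⁻(y) = sup_{φ,ψ} (-L̃₀(φ,ψ,y))`. -/
def Lminus (r : ℕ) (q : Equiv.Perm (Fin r) → Fin (r - 1) → ℝ) (lam : ℝ)
    (y : Edge r → Fin (r - 1) → ℝ) : EReal :=
  ⨆ φ : Equiv.Perm (Fin r) → Fin (r - 1) → ℝ, ⨆ ψ : Edge r → Fin (r - 1) → ℝ,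
    -Ltilde r q lam φ ψ y

/-- `Σ_{unordered edges} ‖φ_π - φ_{π'}‖₂²`. -/
def edgePen (r : ℕ) (φ : Equiv.Perm (Fin r) → Fin (r - 1) → ℝ) : ℝ :=
  (1 / 2) * ∑ e : Edge r, ∑ t, (φ e.1.1 t - φ e.1.2 t) ^ 2

/-- The regularized objective `L_λ` (with the conventions `0·log 0 = 0`,
and `+∞` if `q_{π,t} > 0` and `φ_{π,t} = 0`). -/
def Lreg (r : ℕ) (q : Equiv.Perm (Fin r) → Fin (r - 1) → ℝ) (lam : ℝ)
    (φ : Equiv.Perm (Fin r) → Fin (r - 1) → ℝ) : EReal :=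
  if ∃ π t, 0 < q π t ∧ φ π t = 0 then ⊤
  else (((-∑ π : Equiv.Perm (Fin r), ∑ t, q π t * Real.log (φ π t)) + lam * edgePen r φ : ℝ) : EReal)

/-- `p* = inf { f(φ) + g(ψ) : φ_π = ψ_{π,π'} for every oriented edge }`. -/
def pstar (r : ℕ) (q : Equiv.Perm (Fin r) → Fin (r - 1) → ℝ) (lam : ℝ) : EReal :=
  ⨅ p : {p : (Equiv.Perm (Fin r) → Fin (r - 1) → ℝ) × (Edge r → Fin (r - 1) → ℝ) //
      ∀ e : Edge r, p.1 e.1.1 = p.2 e},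
    (fObj r q p.1.1 + ((gObj r lam p.1.2 : ℝ) : EReal))

/-- The augmented Lagrangian `L_ρ` in scaled dual form. -/
def Lrho (r : ℕ) (q : Equiv.Perm (Fin r) → Fin (r - 1) → ℝ) (lam rho : ℝ)
    (φ : Equiv.Perm (Fin r) → Fin (r - 1) → ℝ) (ψ u : Edge r → Fin (r - 1) → ℝ) : EReal :=
  fObj r q φ +
    ((gObj r lam ψ + rho / 2 *
        ∑ e : Edge r, ((∑ t, (φ e.1.1 t - ψ e t + u e t) ^ 2) - ∑ t, (u e t) ^ 2) : ℝ) : EReal)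

/-- A top-`t` ranking (`t ∈ {1,…,r-1}` encoded as `τ.1 + 1` with `τ.1 : Fin (r-1)`),
given by the injective map `τ⁻¹ : {1,…,t} → {1,…,r}`. -/
def TopRank (r : ℕ) : Type :=
  Σ t : Fin (r - 1), (Fin ((t : ℕ) + 1) ↪ Fin r)

instance (r : ℕ) : Fintype (TopRank r) := by unfold TopRank; infer_instance

/-- `[τ]` : the complete rankings compatible with the top ranking `τ`. -/
def compat (r : ℕ) (τ : TopRank r) : Finset (Equiv.Perm (Fin r)) :=
  Finset.univ.filter fun π =>
    ∀ i : Fin ((τ.1 : ℕ) + 1),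
      π.symm (Fin.castLE (show (τ.1 : ℕ) + 1 ≤ r by have := τ.1.isLt; omega) i) = τ.2 i

/-- `-q·log p` in the extended reals, with `0 · log 0 = 0` and `-q·log 0 = +∞` for `q ≠ 0`. -/
def nlogTerm (q p : ℝ) : EReal :=
  if q = 0 then 0
  else if p = 0 then ⊤
  else ((-(q * Real.log p) : ℝ) : EReal)

/-- `-log x` in the extended reals (`+∞` unless `x > 0`). -/
def nlog (x : ℝ) : EReal :=
  if 0 < x then ((-Real.log x : ℝ) : EReal) else ⊤

/-- The regularized negative log-likelihood `L_λ(θ,φ)`. -/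
def Lfull (r : ℕ) (Θ : Type*) (P : Equiv.Perm (Fin r) → Θ → ℝ) (lam : ℝ)
    (n : ℕ) (τs : Fin n → TopRank r) (θ : Θ)
    (φ : Equiv.Perm (Fin r) → Fin (r - 1) → ℝ) : EReal :=
  (∑ i, nlog (∑ π ∈ compat r (τs i), φ π (τs i).1 * P π θ)) +
    ((lam * edgePen r φ : ℝ) : EReal)


/-! ### Auxiliary lemmas -/

section Aux

variable {r : ℕ}

lemma ereal_coe_sum {ι : Type*} (s : Finset ι) (f : ι → ℝ) :
    ((∑ i ∈ s, f i : ℝ) : EReal) = ∑ i ∈ s, ((f i : ℝ) : EReal) :=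
  map_sum (⟨⟨Real.toEReal, EReal.coe_zero⟩, EReal.coe_add⟩ : ℝ →+ EReal) f s

lemma ereal_sum_eq_top {ι : Type*} (s : Finset ι) (f : ι → EReal)
    (h0 : ∀ i ∈ s, 0 ≤ f i) {i : ι} (hi : i ∈ s) (htop : f i = ⊤) :
    ∑ j ∈ s, f j = ⊤ := by
  have h := Finset.single_le_sum (f := f) h0 hi
  rw [htop, top_le_iff] at h
  exact h

lemma ereal_add_coe_sub (x : EReal) (a b : ℝ) :
    x + (a : EReal) = (x + (b : EReal)) + ((a - b : ℝ) : EReal) := by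
  induction x using EReal.rec with
  | bot => simp
  | coe y =>
      rw [← EReal.coe_add, ← EReal.coe_add, ← EReal.coe_add]
      exact congrArg _ (by ring)
  | top => rw [EReal.top_add_coe, EReal.top_add_coe, EReal.top_add_coe]

lemma sum_le_of_nonpos {ι : Type*} (s : Finset ι) (f : ι → ℝ)
    (h : ∀ i ∈ s, f i ≤ 0) {i : ι} (hi : i ∈ s) : ∑ j ∈ s, f j ≤ f i := by
  have h2 := Finset.single_le_sum (f := fun j => -f j)
    (fun j hj => neg_nonneg.2 (h j hj)) hi
  rw [Finset.sum_neg_distrib] at h2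
  have h3 : -f i ≤ -∑ x ∈ s, f x := h2
  linarith

lemma phi_le_one {φ : Equiv.Perm (Fin r) → Fin (r - 1) → ℝ} (hφ : φ ∈ PhiSet r)
    (π : Equiv.Perm (Fin r)) (t : Fin (r - 1)) : φ π t ≤ 1 := by
  calc φ π t ≤ ∑ s, φ π s :=
        Finset.single_le_sum (fun s _ => hφ.1 π s) (Finset.mem_univ t)
    _ = 1 := hφ.2 π

lemma fpt_nonneg {q x : ℝ} (hq : 0 ≤ q) : 0 ≤ fpt q x := by
  unfold fpt
  split_ifs with h1 h2
  · exact le_top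
  · exact le_refl _
  · push_neg at h1
    obtain ⟨hx0, hx1, _⟩ := h1
    rw [← EReal.coe_zero, EReal.coe_le_coe_iff]
    have hlog : Real.log x ≤ 0 := Real.log_nonpos hx0 hx1
    nlinarith

lemma edgePen_nonneg (φ : Equiv.Perm (Fin r) → Fin (r - 1) → ℝ) :
    0 ≤ edgePen r φ := by
  unfold edgePen; positivity

lemma gObj_nonneg {lam : ℝ} (hlam : 0 ≤ lam) (ψ : Edge r → Fin (r - 1) → ℝ) :
    0 ≤ gObj r lam ψ := by
  unfold gObj; positivity

lemma fObj_nonneg (q : Equiv.Perm (Fin r) → Fin (r - 1) → ℝ)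
    (hq : ∀ π t, 0 ≤ q π t) (φ : Equiv.Perm (Fin r) → Fin (r - 1) → ℝ) :
    0 ≤ fObj r q φ := by
  unfold fObj
  split_ifs with h
  · exact le_top
  · exact Finset.sum_nonneg fun π _ =>
      Finset.sum_nonneg fun t _ => fpt_nonneg (hq π t)

lemma fObj_eq (q : Equiv.Perm (Fin r) → Fin (r - 1) → ℝ)
    (hq : ∀ π t, 0 ≤ q π t) {φ : Equiv.Perm (Fin r) → Fin (r - 1) → ℝ}
    (hφ : φ ∈ PhiSet r) :
    fObj r q φ = if ∃ π t, 0 < q π t ∧ φ π t = 0 then (⊤ : EReal)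
      else ((-(∑ π : Equiv.Perm (Fin r), ∑ t, q π t * Real.log (φ π t)) : ℝ) : EReal) := by
  unfold fObj
  rw [if_neg (by push_neg; exact fun π => hφ.2 π)]
  split_ifs with hbad
  · obtain ⟨π, t, hq0, h0⟩ := hbad
    have htop : fpt (q π t) (φ π t) = ⊤ := by
      unfold fpt
      rw [if_pos (Or.inr (Or.inr ⟨h0, ne_of_gt hq0⟩))]
    refine ereal_sum_eq_top _ _ (fun π' _ => Finset.sum_nonneg fun t' _ => fpt_nonneg (hq π' t'))
      (Finset.mem_univ π) ?_
    exact ereal_sum_eq_top _ _ (fun t' _ => fpt_nonneg (hq π t')) (Finset.mem_univ t) htop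
  · have key : ∀ π t, fpt (q π t) (φ π t) = ((-(q π t * Real.log (φ π t)) : ℝ) : EReal) := by
      intro π t
      unfold fpt
      rw [if_neg]
      · split_ifs with h0
        · simp [h0]
        · rfl
      · rintro (h | h | ⟨h1, h2⟩)
        · exact absurd (hφ.1 π t) (not_le.2 h)
        · exact absurd (phi_le_one hφ π t) (not_le.2 h)
        · exact hbad ⟨π, t, lt_of_le_of_ne (hq π t) (Ne.symm h2), h1⟩
    have h1 : ((-(∑ π : Equiv.Perm (Fin r), ∑ t, q π t * Real.log (φ π t)) : ℝ) : EReal)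
        = ∑ π : Equiv.Perm (Fin r), ∑ t, ((-(q π t * Real.log (φ π t)) : ℝ) : EReal) := by
      rw [show (-(∑ π : Equiv.Perm (Fin r), ∑ t, q π t * Real.log (φ π t)) : ℝ)
          = ∑ π : Equiv.Perm (Fin r), ∑ t, -(q π t * Real.log (φ π t)) by
        rw [← Finset.sum_neg_distrib]
        exact Finset.sum_congr rfl fun π _ => (Finset.sum_neg_distrib _).symm]
      rw [ereal_coe_sum]
      exact Finset.sum_congr rfl fun π _ => ereal_coe_sum _ _
    rw [h1]
    exact Finset.sum_congr rfl fun π _ => Finset.sum_congr rfl fun t _ => key π t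

lemma Lreg_eq (q : Equiv.Perm (Fin r) → Fin (r - 1) → ℝ)
    (hq : ∀ π t, 0 ≤ q π t) (lam : ℝ) {φ : Equiv.Perm (Fin r) → Fin (r - 1) → ℝ}
    (hφ : φ ∈ PhiSet r) :
    Lreg r q lam φ = fObj r q φ + ((lam * edgePen r φ : ℝ) : EReal) := by
  rw [fObj_eq q hq hφ]
  unfold Lreg
  split_ifs with h
  · exact (EReal.top_add_coe _).symm
  · rw [← EReal.coe_add]

lemma gObj_diag (lam : ℝ) (φ : Equiv.Perm (Fin r) → Fin (r - 1) → ℝ) :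
    gObj r lam (fun e : Edge r => φ e.1.1) = lam * edgePen r φ := by
  unfold gObj edgePen
  simp only [Edge.rev]
  ring

lemma pstar_le (q : Equiv.Perm (Fin r) → Fin (r - 1) → ℝ)
    (hq : ∀ π t, 0 ≤ q π t) (lam : ℝ)
    {φ : Equiv.Perm (Fin r) → Fin (r - 1) → ℝ} (hφ : φ ∈ PhiSet r) :
    pstar r q lam ≤ Lreg r q lam φ := by
  unfold pstar
  refine le_trans (iInf_le _ ⟨⟨φ, fun e => φ e.1.1⟩, fun e => rfl⟩) ?_
  rw [gObj_diag, ← Lreg_eq q hq lam hφ]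

end Aux

theorem stmt12 (r : ℕ) (hr : 2 ≤ r) (lam : ℝ) (hlam : 0 < lam)
    (q : Equiv.Perm (Fin r) → Fin (r - 1) → ℝ) (hq : ∀ π t, 0 ≤ q π t)
    (φs : ℕ → Equiv.Perm (Fin r) → Fin (r - 1) → ℝ)
    (ψs : ℕ → Edge r → Fin (r - 1) → ℝ)
    (hΦ : ∀ l, φs l ∈ PhiSet r)
    (hres : ∀ e : Edge r,
      Tendsto (fun l => φs l e.1.1 - ψs l e) atTop (nhds 0))
    (hobj : Tendsto (fun l => fObj r q (φs l) + ((gObj r lam (ψs l) : ℝ) : EReal))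
      atTop (nhds (pstar r q lam))) :
    IsLeast {x : EReal | ∃ φ ∈ PhiSet r, Lreg r q lam φ = x} (pstar r q lam) ∧
      Tendsto (fun l => Lreg r q lam (φs l)) atTop (nhds (pstar r q lam)) := by
  classical
  -- basic facts about pstar
  have hps_nonneg : (0 : EReal) ≤ pstar r q lam := by
    refine le_iInf fun p => add_nonneg (fObj_nonneg q hq _) ?_
    rw [← EReal.coe_zero, EReal.coe_le_coe_iff]
    exact gObj_nonneg hlam.le _
  have hps_nebot : pstar r q lam ≠ ⊥ :=
    ((EReal.bot_lt_zero).trans_le hps_nonneg).ne'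
  have hps_netop : pstar r q lam ≠ ⊤ := by
    have hrm : (0 : ℝ) < ((r - 1 : ℕ) : ℝ) := by
      have : 1 ≤ r - 1 := by omega
      exact_mod_cast Nat.lt_of_lt_of_le Nat.zero_lt_one this
    set u : Equiv.Perm (Fin r) → Fin (r - 1) → ℝ := fun _ _ => (((r - 1 : ℕ) : ℝ))⁻¹ with hu_def
    have hu : u ∈ PhiSet r := by
      constructor
      · intro π t; exact inv_nonneg.2 hrm.le
      · intro π
        simp only [hu_def, Finset.sum_const, Finset.card_univ, Fintype.card_fin, nsmul_eq_mul]
        exact mul_inv_cancel₀ (ne_of_gt hrm)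
    have hne : Lreg r q lam u ≠ ⊤ := by
      unfold Lreg
      rw [if_neg]
      · exact EReal.coe_ne_top _
      · rintro ⟨π, t, h1, h2⟩
        rw [hu_def] at h2
        simp only [inv_eq_zero] at h2
        exact absurd h2 (ne_of_gt hrm)
    exact fun h => hne (top_le_iff.1 (h ▸ pstar_le q hq lam hu))
  -- the real value of pstar
  set p : ℝ := (pstar r q lam).toReal with hp_def
  have hpe : pstar r q lam = (p : EReal) := (EReal.coe_toReal hps_netop hps_nebot).symm
  -- Part 2 : convergence of Lreg (φs l)
  have hd : Tendsto (fun l => lam * edgePen r (φs l) - gObj r lam (ψs l)) atTop (nhds 0) := by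
    have key : ∀ e : Edge r, ∀ t : Fin (r - 1),
        Tendsto (fun l => (φs l e.1.1 t - φs l e.1.2 t) ^ 2
          - (ψs l e t - ψs l e.rev t) ^ 2) atTop (nhds 0) := by
      intro e t
      have h1 : Tendsto (fun l => φs l e.1.1 t - ψs l e t) atTop (nhds 0) := by
        have := ((continuous_apply t).tendsto (0 : Fin (r - 1) → ℝ)).comp (hres e)
        simpa [Function.comp_def] using this
      have h2 : Tendsto (fun l => φs l e.1.2 t - ψs l e.rev t) atTop (nhds 0) := by
        have := ((continuous_apply t).tendsto (0 : Fin (r - 1) → ℝ)).comp (hres e.rev)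
        exact this
      have hc : Tendsto (fun l => (φs l e.1.1 t - ψs l e t)
          - (φs l e.1.2 t - ψs l e.rev t)) atTop (nhds 0) := by
        simpa using h1.sub h2
      set c : ℕ → ℝ := fun l => (φs l e.1.1 t - ψs l e t) - (φs l e.1.2 t - ψs l e.rev t)
        with hc_def
      set a : ℕ → ℝ := fun l => φs l e.1.1 t - φs l e.1.2 t with ha_def
      have hb : ∀ l, ψs l e t - ψs l e.rev t = a l - c l := by
        intro l; rw [ha_def, hc_def]; ring
      have hbound : ∀ l, |(a l) ^ 2 - (a l - c l) ^ 2| ≤ |c l| * (2 + |c l|) := by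
        intro l
        have ha1 : |a l| ≤ 1 := by
          have h1 := (hΦ l).1 e.1.1 t
          have h2 := phi_le_one (hΦ l) e.1.1 t
          have h3 := (hΦ l).1 e.1.2 t
          have h4 := phi_le_one (hΦ l) e.1.2 t
          rw [ha_def, abs_le]
          constructor <;> simp <;> linarith
        have heq : (a l) ^ 2 - (a l - c l) ^ 2 = c l * (2 * a l - c l) := by ring
        rw [heq, abs_mul]
        have h5 : |2 * a l - c l| ≤ 2 + |c l| := by
          calc |2 * a l - c l| ≤ |2 * a l| + |c l| := abs_sub _ _
            _ = 2 * |a l| + |c l| := by rw [abs_mul]; norm_num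
            _ ≤ 2 + |c l| := by linarith
        exact mul_le_mul_of_nonneg_left h5 (abs_nonneg _)
      have hg : Tendsto (fun l => |c l| * (2 + |c l|)) atTop (nhds 0) := by
        have := (hc.abs).mul ((tendsto_const_nhds (x := (2 : ℝ))).add hc.abs)
        simpa using this
      have habs : Tendsto (fun l => |(a l) ^ 2 - (a l - c l) ^ 2|) atTop (nhds 0) :=
        squeeze_zero (fun l => abs_nonneg _) hbound hg
      have hzero : Tendsto (fun l => (a l) ^ 2 - (a l - c l) ^ 2) atTop (nhds 0) :=
        (tendsto_zero_iff_abs_tendsto_zero _).2 habs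
      exact hzero.congr fun l => by rw [hb l]
    have hform : ∀ l, lam * edgePen r (φs l) - gObj r lam (ψs l)
        = lam / 2 * ∑ e : Edge r, ∑ t, ((φs l e.1.1 t - φs l e.1.2 t) ^ 2
          - (ψs l e t - ψs l e.rev t) ^ 2) := by
      intro l
      unfold edgePen gObj
      rw [show (∑ e : Edge r, ∑ t : Fin (r - 1), ((φs l e.1.1 t - φs l e.1.2 t) ^ 2
            - (ψs l e t - ψs l e.rev t) ^ 2))
          = (∑ e : Edge r, ∑ t : Fin (r - 1), (φs l e.1.1 t - φs l e.1.2 t) ^ 2)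
            - ∑ e : Edge r, ∑ t : Fin (r - 1), (ψs l e t - ψs l e.rev t) ^ 2 by
        rw [← Finset.sum_sub_distrib]
        exact Finset.sum_congr rfl fun e _ => Finset.sum_sub_distrib _ _]
      ring
    have hsum : Tendsto (fun l => ∑ e : Edge r, ∑ t : Fin (r - 1),
        ((φs l e.1.1 t - φs l e.1.2 t) ^ 2 - (ψs l e t - ψs l e.rev t) ^ 2)) atTop (nhds 0) := by
      have := tendsto_finset_sum (Finset.univ : Finset (Edge r)) fun e _ =>
        tendsto_finset_sum (Finset.univ : Finset (Fin (r - 1))) fun t _ => key e t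
      simpa using this
    have := hsum.const_mul (lam / 2)
    rw [mul_zero] at this
    exact this.congr fun l => (hform l).symm
  have hFnebot : ∀ l, fObj r q (φs l) + ((gObj r lam (ψs l) : ℝ) : EReal) ≠ ⊥ := by
    intro l
    have h0 : (0 : EReal) ≤ fObj r q (φs l) + ((gObj r lam (ψs l) : ℝ) : EReal) := by
      refine add_nonneg (fObj_nonneg q hq _) ?_
      rw [← EReal.coe_zero, EReal.coe_le_coe_iff]
      exact gObj_nonneg hlam.le _
    exact ((EReal.bot_lt_zero).trans_le h0).ne'
  have hevF : ∀ᶠ l in atTop, fObj r q (φs l) + ((gObj r lam (ψs l) : ℝ) : EReal) ≠ ⊤ := by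
    have hlt : pstar r q lam < ⊤ := lt_top_iff_ne_top.2 hps_netop
    exact (hobj.eventually_lt_const hlt).mono fun l h => h.ne
  have hFtoR : Tendsto
      (fun l => (fObj r q (φs l) + ((gObj r lam (ψs l) : ℝ) : EReal)).toReal) atTop (nhds p) :=
    (EReal.tendsto_toReal hps_netop hps_nebot).comp hobj
  have hpart2 : Tendsto (fun l => Lreg r q lam (φs l)) atTop (nhds (pstar r q lam)) := by
    have hreal : Tendsto (fun l =>
        (fObj r q (φs l) + ((gObj r lam (ψs l) : ℝ) : EReal)).toReal
          + (lam * edgePen r (φs l) - gObj r lam (ψs l))) atTop (nhds (p + 0)) := hFtoR.add hd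
    rw [add_zero] at hreal
    rw [hpe]
    refine Tendsto.congr' ?_ (EReal.tendsto_coe.2 hreal)
    filter_upwards [hevF] with l hF
    rw [EReal.coe_add, EReal.coe_toReal hF (hFnebot l)]
    rw [Lreg_eq q hq lam (hΦ l)]
    exact (ereal_add_coe_sub (fObj r q (φs l)) (lam * edgePen r (φs l)) (gObj r lam (ψs l))).symm
  refine ⟨⟨?_, ?_⟩, hpart2⟩
  · -- membership : the infimum is attained
    have hcl : IsClosed (PhiSet r) := by
      have hset : PhiSet r = (⋂ π : Equiv.Perm (Fin r), ⋂ t : Fin (r - 1),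
          {φ : Equiv.Perm (Fin r) → Fin (r - 1) → ℝ | 0 ≤ φ π t}) ∩
          ⋂ π : Equiv.Perm (Fin r),
            {φ : Equiv.Perm (Fin r) → Fin (r - 1) → ℝ | (∑ t, φ π t) = 1} := by
        ext φ
        simp only [PhiSet, Set.mem_inter_iff, Set.mem_iInter, Set.mem_setOf_eq]
      rw [hset]
      refine IsClosed.inter (isClosed_iInter fun π => isClosed_iInter fun t => ?_)
        (isClosed_iInter fun π => ?_)
      · exact isClosed_le continuous_const ((continuous_apply t).comp (continuous_apply π))
      · exact isClosed_eq (by fun_prop) continuous_const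
    have hKc : IsCompact (Set.univ.pi fun _ : Equiv.Perm (Fin r) =>
        Set.univ.pi fun _ : Fin (r - 1) => Set.Icc (0 : ℝ) 1) :=
      isCompact_univ_pi fun _ => isCompact_univ_pi fun _ => isCompact_Icc
    have hsubK : PhiSet r ⊆ Set.univ.pi fun _ : Equiv.Perm (Fin r) =>
        Set.univ.pi fun _ : Fin (r - 1) => Set.Icc (0 : ℝ) 1 := by
      intro φ hφm
      rw [Set.mem_univ_pi]
      intro π
      rw [Set.mem_univ_pi]
      intro t
      exact ⟨hφm.1 π t, phi_le_one hφm π t⟩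
    have hcomp : IsCompact (PhiSet r) := hKc.of_isClosed_subset hcl hsubK
    obtain ⟨φstar, hφstar, ns, hmono, hsub⟩ := hcomp.tendsto_subseq (fun l => hΦ l)
    have hcoord : ∀ π t, Tendsto (fun k => φs (ns k) π t) atTop (nhds (φstar π t)) := by
      intro π t
      exact (((continuous_apply t).comp (continuous_apply π)).tendsto φstar).comp hsub
    have hsubL : Tendsto (fun k => Lreg r q lam (φs (ns k))) atTop (nhds (pstar r q lam)) :=
      hpart2.comp hmono.tendsto_atTop
    by_cases hbad : ∃ π t, 0 < q π t ∧ φstar π t = 0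
    · exfalso
      have htop : Tendsto (fun k => Lreg r q lam (φs (ns k))) atTop (nhds ⊤) := by
        rw [EReal.tendsto_nhds_top_iff_real]
        intro x
        obtain ⟨π, t, hq0, h0⟩ := hbad
        have hεpos : (0 : ℝ) < Real.exp (-x / q π t) := Real.exp_pos _
        have hev : ∀ᶠ k in atTop, φs (ns k) π t < Real.exp (-x / q π t) := by
          have h1 := hcoord π t
          rw [h0] at h1
          exact h1.eventually_lt_const hεpos
        filter_upwards [hev] with k hk
        unfold Lreg
        split_ifs with hb
        · exact EReal.coe_lt_top x
        · rw [EReal.coe_lt_coe_iff]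
          push_neg at hb
          have hne : φs (ns k) π t ≠ 0 := hb π t hq0
          have hpos : 0 < φs (ns k) π t :=
            lt_of_le_of_ne ((hΦ (ns k)).1 π t) (Ne.symm hne)
          have hlog : Real.log (φs (ns k) π t) < -x / q π t := by
            have h2 := Real.log_lt_log hpos hk
            rwa [Real.log_exp] at h2
          have hterm : x < -(q π t * Real.log (φs (ns k) π t)) := by
            have h2 : q π t * Real.log (φs (ns k) π t) < q π t * (-x / q π t) :=
              mul_lt_mul_of_pos_left hlog hq0
            have h3 : q π t * (-x / q π t) = -x := by field_simp [mul_comm]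
            linarith
          have hterm_np : ∀ π' t', q π' t' * Real.log (φs (ns k) π' t') ≤ 0 := fun π' t' =>
            mul_nonpos_iff.2 (Or.inl ⟨hq π' t',
              Real.log_nonpos ((hΦ (ns k)).1 π' t') (phi_le_one (hΦ (ns k)) π' t')⟩)
          have hsumle : (∑ π' : Equiv.Perm (Fin r), ∑ t', q π' t' * Real.log (φs (ns k) π' t'))
              ≤ q π t * Real.log (φs (ns k) π t) :=
            calc (∑ π' : Equiv.Perm (Fin r), ∑ t', q π' t' * Real.log (φs (ns k) π' t'))
                ≤ ∑ t', q π t' * Real.log (φs (ns k) π t') :=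
                  sum_le_of_nonpos _ _
                    (fun π' _ => Finset.sum_nonpos fun t' _ => hterm_np π' t')
                    (Finset.mem_univ π)
              _ ≤ q π t * Real.log (φs (ns k) π t) :=
                  sum_le_of_nonpos _ _ (fun t' _ => hterm_np π t') (Finset.mem_univ t)
          have hpen := mul_nonneg hlam.le (edgePen_nonneg (r := r) (φs (ns k)))
          linarith
      exact hps_netop (tendsto_nhds_unique hsubL htop)
    · refine ⟨φstar, hφstar, ?_⟩
      have hev : ∀ᶠ k in atTop, ∀ π t, 0 < q π t → φs (ns k) π t ≠ 0 := by
        rw [Filter.eventually_all]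
        intro π
        rw [Filter.eventually_all]
        intro t
        by_cases hq0 : 0 < q π t
        · have hpos : 0 < φstar π t :=
            lt_of_le_of_ne (hφstar.1 π t) (Ne.symm fun h => hbad ⟨π, t, hq0, h⟩)
          exact ((hcoord π t).eventually_const_lt hpos).mono fun k hk _ => ne_of_gt hk
        · exact Filter.Eventually.of_forall fun k h => absurd h hq0
      have hlog : ∀ π t, Tendsto (fun k => q π t * Real.log (φs (ns k) π t)) atTop
          (nhds (q π t * Real.log (φstar π t))) := by
        intro π t
        rcases eq_or_lt_of_le (hq π t) with h0 | h0
        · simp only [← h0, zero_mul]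
          exact tendsto_const_nhds
        · have hpos : 0 < φstar π t :=
            lt_of_le_of_ne (hφstar.1 π t) (Ne.symm fun h => hbad ⟨π, t, h0, h⟩)
          exact (((Real.continuousAt_log (ne_of_gt hpos)).tendsto).comp (hcoord π t)).const_mul _
      have hpen : Tendsto (fun k => edgePen r (φs (ns k))) atTop (nhds (edgePen r φstar)) := by
        unfold edgePen
        refine Tendsto.const_mul _ ?_
        refine tendsto_finset_sum _ fun e _ => tendsto_finset_sum _ fun t _ => ?_
        exact ((hcoord e.1.1 t).sub (hcoord e.1.2 t)).pow 2
      have hG : Tendsto (fun k =>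
          -(∑ π : Equiv.Perm (Fin r), ∑ t, q π t * Real.log (φs (ns k) π t))
            + lam * edgePen r (φs (ns k))) atTop
          (nhds (-(∑ π : Equiv.Perm (Fin r), ∑ t, q π t * Real.log (φstar π t))
            + lam * edgePen r φstar)) :=
        ((tendsto_finset_sum _ fun π _ =>
          tendsto_finset_sum _ fun t _ => hlog π t).neg).add (hpen.const_mul lam)
      have hLs : Tendsto (fun k => Lreg r q lam (φs (ns k))) atTop
          (nhds (Lreg r q lam φstar)) := by
        have heq : Lreg r q lam φstar =
            (((-(∑ π : Equiv.Perm (Fin r), ∑ t, q π t * Real.log (φstar π t))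
              + lam * edgePen r φstar : ℝ)) : EReal) := by
          unfold Lreg
          rw [if_neg hbad]
        rw [heq]
        refine Tendsto.congr' ?_ (EReal.tendsto_coe.2 hG)
        filter_upwards [hev] with k hk
        unfold Lreg
        rw [if_neg]
        rintro ⟨π, t, h1, h2⟩
        exact hk π t h1 h2
      exact tendsto_nhds_unique hLs hsubL
  · rintro x ⟨φ, hφ, rfl⟩
    exact pstar_le q hq lam hφ

end Paper
end
end

section
/- (Monotonicity of the EM iteration.) Let (θ^m, φ^m) ∈ Θ × Φ satisfy Σ_{π∈[τ_i]} φ^m_{π,t(τ_i)}·P(π;θ^m) > 0 for every i = 1,…,n. Define, for each i, q_{i,π} = φ^m_{π,t(τ_i)}·P(π;θ^m) / Σ_{π'∈[τ_i]} φ^m_{π',t(τ_i)}·P(π';θ^m) for π ∈ [τ_i] and q_{i,π} = 0 for π ∉ [τ_i]. Suppose θ^{m+1} ∈ Θ minimizes θ ↦ −Σ_{i=1}^n Σ_{π∈[τ_i]} q_{i,π}·log P(π;θ) over Θ, and φ^{m+1} ∈ Φ minimizes φ ↦ −Σ_{i=1}^n Σ_{π∈[τ_i]} q_{i,π}·log φ_{π,t(τ_i)}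 + λ·Σ_{{π,π'}∈E} ‖φ_π − φ_{π'}‖₂² over Φ (extended-real-valued, with log 0 = −∞). Then L_λ(θ^{m+1}, φ^{m+1}) ≤ L_λ(θ^m, φ^m). -/
open Finset Filter

noncomputable section

open Classical

namespace Paper

lemma coe_sum {α : Type*} (s : Finset α) (f : α → ℝ) :
    ((∑ i ∈ s, f i : ℝ) : EReal) = ∑ i ∈ s, (f i : EReal) := by
  induction s using Finset.cons_induction with
  | empty => simp
  | cons a s ha ih => rw [Finset.sum_cons, Finset.sum_cons, EReal.coe_add, ih]

lemma ne_bot_of_nonneg {x : EReal} (h : 0 ≤ x) : x ≠ ⊥ := by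
  intro hb; rw [hb] at h; exact absurd h (by simp)

lemma nlogTerm_nonneg {q x : ℝ} (hq : 0 ≤ q) (hx0 : 0 ≤ x) (hx1 : x ≤ 1) :
    0 ≤ nlogTerm q x := by
  unfold nlogTerm
  split_ifs with h1 h2
  · exact le_refl _
  · exact le_top
  · have hlog : Real.log x ≤ 0 := Real.log_nonpos hx0 hx1
    have : (0:ℝ) ≤ -(q * Real.log x) := by nlinarith
    exact_mod_cast this

lemma gibbs {α : Type*} (c : Finset α) (a q : α → ℝ)
    (ha : ∀ π ∈ c, 0 ≤ a π) (hq0 : ∀ π ∈ c, 0 ≤ q π)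
    (hq1 : ∑ π ∈ c, q π = 1)
    (hS : 0 < ∑ π ∈ c, a π)
    (hpos : ∀ π ∈ c, 0 < q π → 0 < a π) :
    -Real.log (∑ π ∈ c, a π) ≤ ∑ π ∈ c, (q π * Real.log (q π) - q π * Real.log (a π)) := by
  set S := ∑ π ∈ c, a π with hSdef
  have key : ∀ π ∈ c,
      q π * Real.log (a π) - q π * Real.log (q π) - q π * Real.log S ≤ a π / S - q π := by
    intro π hπ
    rcases eq_or_lt_of_le (hq0 π hπ) with h | h
    · have hq' : q π = 0 := h.symm
      simp [hq']
      exact div_nonneg (ha π hπ) hS.le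
    · have haπ : 0 < a π := hpos π hπ h
      have hx : 0 < a π / (q π * S) := by positivity
      have hlog := Real.log_le_sub_one_of_pos hx
      rw [Real.log_div (by positivity) (by positivity),
        Real.log_mul (ne_of_gt h) (ne_of_gt hS)] at hlog
      have h2 : q π * (Real.log (a π) - (Real.log (q π) + Real.log S)) ≤
          q π * (a π / (q π * S) - 1) := mul_le_mul_of_nonneg_left hlog (le_of_lt h)
      have h3 : q π * (a π / (q π * S)) = a π / S := by
        field_simp
      nlinarith [h2, h3]
  have hsum := Finset.sum_le_sum key
  rw [Finset.sum_sub_distrib, Finset.sum_sub_distrib, ← Finset.sum_mul, hq1, one_mul,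
    Finset.sum_sub_distrib, ← Finset.sum_div, hq1] at hsum
  have hss : S / S = 1 := div_self (ne_of_gt hS)
  rw [hss] at hsum
  rw [Finset.sum_sub_distrib]
  linarith [hsum]

lemma nlogTerm_sum_coe {α : Type*} (c : Finset α) (q p : α → ℝ)
    (hq0 : ∀ π ∈ c, 0 ≤ q π) (hpos : ∀ π ∈ c, 0 < q π → p π ≠ 0) :
    (∑ π ∈ c, nlogTerm (q π) (p π)) = ((∑ π ∈ c, -(q π * Real.log (p π)) : ℝ) : EReal) := by
  rw [coe_sum]
  apply Finset.sum_congr rfl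
  intro π hπ
  unfold nlogTerm
  rcases eq_or_lt_of_le (hq0 π hπ) with h | h
  · rw [if_pos h.symm, ← h]; norm_num
  · rw [if_neg (ne_of_gt h), if_neg (hpos π hπ h)]

lemma jensen_step {α : Type*} (c : Finset α) (q f p : α → ℝ)
    (hf0 : ∀ π ∈ c, 0 ≤ f π) (hf1 : ∀ π ∈ c, f π ≤ 1)
    (hp0 : ∀ π ∈ c, 0 ≤ p π) (hp1 : ∀ π ∈ c, p π ≤ 1)
    (hq0 : ∀ π ∈ c, 0 ≤ q π) (hq1 : ∑ π ∈ c, q π = 1) :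
    nlog (∑ π ∈ c, f π * p π) ≤
      (∑ π ∈ c, nlogTerm (q π) (p π)) + (∑ π ∈ c, nlogTerm (q π) (f π)) +
        ((∑ π ∈ c, q π * Real.log (q π) : ℝ) : EReal) := by
  by_cases hbad : ∃ π ∈ c, 0 < q π ∧ f π * p π = 0
  · obtain ⟨π₀, hπ₀, hqπ, hfp⟩ := hbad
    have hP : ∀ π ∈ c, (0:EReal) ≤ nlogTerm (q π) (p π) := fun π hπ =>
      nlogTerm_nonneg (hq0 π hπ) (hp0 π hπ) (hp1 π hπ)
    have hF : ∀ π ∈ c, (0:EReal) ≤ nlogTerm (q π) (f π) := fun π hπ =>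
      nlogTerm_nonneg (hq0 π hπ) (hf0 π hπ) (hf1 π hπ)
    have hsP : (0:EReal) ≤ ∑ π ∈ c, nlogTerm (q π) (p π) := Finset.sum_nonneg hP
    have hsF : (0:EReal) ≤ ∑ π ∈ c, nlogTerm (q π) (f π) := Finset.sum_nonneg hF
    have htop : (∑ π ∈ c, nlogTerm (q π) (p π)) + (∑ π ∈ c, nlogTerm (q π) (f π)) = ⊤ := by
      rcases mul_eq_zero.1 hfp with h | h
      · have ht : nlogTerm (q π₀) (f π₀) = ⊤ := by
          unfold nlogTerm; rw [if_neg (ne_of_gt hqπ), if_pos h]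
        have h2 : (∑ π ∈ c, nlogTerm (q π) (f π)) = ⊤ :=
          top_le_iff.1 (ht ▸ Finset.single_le_sum hF hπ₀)
        rw [h2, add_comm]
        exact EReal.top_add_of_ne_bot (ne_bot_of_nonneg hsP)
      · have ht : nlogTerm (q π₀) (p π₀) = ⊤ := by
          unfold nlogTerm; rw [if_neg (ne_of_gt hqπ), if_pos h]
        have h2 : (∑ π ∈ c, nlogTerm (q π) (p π)) = ⊤ :=
          top_le_iff.1 (ht ▸ Finset.single_le_sum hP hπ₀)
        rw [h2]
        exact EReal.top_add_of_ne_bot (ne_bot_of_nonneg hsF)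
    rw [htop, EReal.top_add_of_ne_bot (EReal.coe_ne_bot _)]
    exact le_top
  · push_neg at hbad
    have hpos : ∀ π ∈ c, 0 < q π → 0 < f π * p π := fun π hπ hq =>
      lt_of_le_of_ne (mul_nonneg (hf0 π hπ) (hp0 π hπ)) (Ne.symm (hbad π hπ hq))
    obtain ⟨π₀, hπ₀, hq₀⟩ : ∃ π ∈ c, q π ≠ 0 := by
      by_contra h; push_neg at h
      rw [Finset.sum_eq_zero h] at hq1; norm_num at hq1
    have hqpos : 0 < q π₀ := lt_of_le_of_ne (hq0 π₀ hπ₀) (Ne.symm hq₀)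
    have hS : 0 < ∑ π ∈ c, f π * p π :=
      lt_of_lt_of_le (hpos π₀ hπ₀ hqpos)
        (Finset.single_le_sum (fun π hπ => mul_nonneg (hf0 π hπ) (hp0 π hπ)) hπ₀)
    have hgibbs := gibbs c (fun π => f π * p π) q
      (fun π hπ => mul_nonneg (hf0 π hπ) (hp0 π hπ)) hq0 hq1 hS hpos
    have hPne : ∀ π ∈ c, 0 < q π → p π ≠ 0 := by
      intro π hπ hq h0
      have := hpos π hπ hq; rw [h0, mul_zero] at this; exact lt_irrefl 0 this
    have hFne : ∀ π ∈ c, 0 < q π → f π ≠ 0 := by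
      intro π hπ hq h0
      have := hpos π hπ hq; rw [h0, zero_mul] at this; exact lt_irrefl 0 this
    rw [nlogTerm_sum_coe c q p hq0 hPne, nlogTerm_sum_coe c q f hq0 hFne,
      nlog, if_pos hS, ← EReal.coe_add, ← EReal.coe_add, EReal.coe_le_coe_iff]
    have hsplit : ∀ π ∈ c, q π * Real.log (q π) - q π * Real.log (f π * p π) =
        q π * Real.log (q π) + (-(q π * Real.log (p π)) + -(q π * Real.log (f π))) := by
      intro π hπ
      rcases eq_or_lt_of_le (hq0 π hπ) with h | h
      · rw [← h]; ring
      · rw [Real.log_mul (hFne π hπ h) (hPne π hπ h)]; ring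
    rw [Finset.sum_congr rfl hsplit] at hgibbs
    rw [Finset.sum_add_distrib, Finset.sum_add_distrib] at hgibbs
    linarith [hgibbs]

lemma jensen_eq {α : Type*} (c : Finset α) (q f p : α → ℝ)
    (hf0 : ∀ π ∈ c, 0 ≤ f π) (hp0 : ∀ π ∈ c, 0 ≤ p π)
    (hS : 0 < ∑ π ∈ c, f π * p π)
    (hq : ∀ π ∈ c, q π = f π * p π / ∑ π' ∈ c, f π' * p π') :
    (∑ π ∈ c, nlogTerm (q π) (p π)) + (∑ π ∈ c, nlogTerm (q π) (f π)) +
      ((∑ π ∈ c, q π * Real.log (q π) : ℝ) : EReal)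
      = nlog (∑ π ∈ c, f π * p π) := by
  set S := ∑ π ∈ c, f π * p π with hSdef
  have hq0 : ∀ π ∈ c, 0 ≤ q π := fun π hπ => by
    rw [hq π hπ]
    exact div_nonneg (mul_nonneg (hf0 π hπ) (hp0 π hπ)) hS.le
  have hq1 : ∑ π ∈ c, q π = 1 := by
    rw [Finset.sum_congr rfl hq, ← Finset.sum_div, ← hSdef]
    exact div_self (ne_of_gt hS)
  have hpos : ∀ π ∈ c, 0 < q π → 0 < f π * p π := by
    intro π hπ hqπ
    rcases lt_or_eq_of_le (mul_nonneg (hf0 π hπ) (hp0 π hπ)) with h | h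
    · exact h
    · exfalso; rw [hq π hπ, ← h, zero_div] at hqπ; exact lt_irrefl 0 hqπ
  have hPne : ∀ π ∈ c, 0 < q π → p π ≠ 0 := by
    intro π hπ hqπ h0
    have := hpos π hπ hqπ; rw [h0, mul_zero] at this; exact lt_irrefl 0 this
  have hFne : ∀ π ∈ c, 0 < q π → f π ≠ 0 := by
    intro π hπ hqπ h0
    have := hpos π hπ hqπ; rw [h0, zero_mul] at this; exact lt_irrefl 0 this
  rw [nlogTerm_sum_coe c q p hq0 hPne, nlogTerm_sum_coe c q f hq0 hFne,
    nlog, if_pos hS, ← EReal.coe_add, ← EReal.coe_add, EReal.coe_eq_coe_iff]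
  have hterm : ∀ π ∈ c, -(q π * Real.log (p π)) + -(q π * Real.log (f π)) +
      q π * Real.log (q π) = -(q π * Real.log S) := by
    intro π hπ
    rcases eq_or_lt_of_le (hq0 π hπ) with h | h
    · rw [← h]; ring
    · have hfp : 0 < f π * p π := hpos π hπ h
      have hlogq : Real.log (q π) = Real.log (f π) + Real.log (p π) - Real.log S := by
        rw [hq π hπ, Real.log_div (ne_of_gt hfp) (ne_of_gt hS),
          Real.log_mul (hFne π hπ h) (hPne π hπ h)]
      rw [hlogq]; ring
  calc (∑ π ∈ c, -(q π * Real.log (p π))) + (∑ π ∈ c, -(q π * Real.log (f π))) +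
        ∑ π ∈ c, q π * Real.log (q π)
      = ∑ π ∈ c, (-(q π * Real.log (p π)) + -(q π * Real.log (f π)) +
          q π * Real.log (q π)) := by
        rw [Finset.sum_add_distrib, Finset.sum_add_distrib]
    _ = ∑ π ∈ c, -(q π * Real.log S) := Finset.sum_congr rfl hterm
    _ = -Real.log S := by
        simp only [Finset.sum_neg_distrib]; rw [← Finset.sum_mul, hq1, one_mul]


theorem stmt14 (r : ℕ) (hr : 2 ≤ r) (lam : ℝ) (hlam : 0 < lam)
    (Θ : Type*) [Nonempty Θ] (P : Equiv.Perm (Fin r) → Θ → ℝ)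
    (hP : ∀ θ : Θ, (∀ π, 0 ≤ P π θ) ∧ (∑ π : Equiv.Perm (Fin r), P π θ) = 1)
    (n : ℕ) (τs : Fin n → TopRank r)
    (θm : Θ) (φm : Equiv.Perm (Fin r) → Fin (r - 1) → ℝ) (hφm : φm ∈ PhiSet r)
    (hpos : ∀ i, 0 < ∑ π ∈ compat r (τs i), φm π (τs i).1 * P π θm)
    (Q : Fin n → Equiv.Perm (Fin r) → ℝ)
    (hQ : ∀ i π, Q i π =
      if π ∈ compat r (τs i) then
        φm π (τs i).1 * P π θm / ∑ π' ∈ compat r (τs i), φm π' (τs i).1 * P π' θm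
      else 0)
    (θm1 : Θ)
    (hθ : ∀ θ' : Θ,
      (∑ i, ∑ π ∈ compat r (τs i), nlogTerm (Q i π) (P π θm1)) ≤
        ∑ i, ∑ π ∈ compat r (τs i), nlogTerm (Q i π) (P π θ'))
    (φm1 : Equiv.Perm (Fin r) → Fin (r - 1) → ℝ) (hφm1 : φm1 ∈ PhiSet r)
    (hφ : ∀ φ' ∈ PhiSet r,
      (∑ i, ∑ π ∈ compat r (τs i), nlogTerm (Q i π) (φm1 π (τs i).1)) +
          ((lam * edgePen r φm1 : ℝ) : EReal) ≤
        (∑ i, ∑ π ∈ compat r (τs i), nlogTerm (Q i π) (φ' π (τs i).1)) +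
          ((lam * edgePen r φ' : ℝ) : EReal)) :
    Lfull r Θ P lam n τs θm1 φm1 ≤ Lfull r Θ P lam n τs θm φm :=
 by
  classical
  have hQeq : ∀ i, ∀ π ∈ compat r (τs i),
      Q i π = φm π (τs i).1 * P π θm / ∑ π' ∈ compat r (τs i), φm π' (τs i).1 * P π' θm := by
    intro i π hπ; rw [hQ i π, if_pos hπ]
  have hQ0 : ∀ i, ∀ π ∈ compat r (τs i), 0 ≤ Q i π := by
    intro i π hπ
    rw [hQeq i π hπ]
    exact div_nonneg (mul_nonneg (hφm.1 π _) ((hP θm).1 π)) (hpos i).le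
  have hQ1 : ∀ i, ∑ π ∈ compat r (τs i), Q i π = 1 := by
    intro i
    rw [Finset.sum_congr rfl (hQeq i), ← Finset.sum_div]
    exact div_self (ne_of_gt (hpos i))
  have hPb : ∀ (θ : Θ) (π : Equiv.Perm (Fin r)), 0 ≤ P π θ ∧ P π θ ≤ 1 := by
    intro θ π
    refine ⟨(hP θ).1 π, ?_⟩
    calc P π θ ≤ ∑ π', P π' θ :=
          Finset.single_le_sum (fun π' _ => (hP θ).1 π') (Finset.mem_univ π)
      _ = 1 := (hP θ).2
  have hφb : ∀ (φ : Equiv.Perm (Fin r) → Fin (r - 1) → ℝ), φ ∈ PhiSet r →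
      ∀ π t, 0 ≤ φ π t ∧ φ π t ≤ 1 := by
    intro φ hφ' π t
    refine ⟨hφ'.1 π t, ?_⟩
    calc φ π t ≤ ∑ t', φ π t' :=
          Finset.single_le_sum (fun t' _ => hφ'.1 π t') (Finset.mem_univ t)
      _ = 1 := hφ'.2 π
  have hsplit : ∀ (θ : Θ) (φ : Equiv.Perm (Fin r) → Fin (r - 1) → ℝ),
      (∑ i, ((∑ π ∈ compat r (τs i), nlogTerm (Q i π) (P π θ)) +
        (∑ π ∈ compat r (τs i), nlogTerm (Q i π) (φ π (τs i).1)) +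
        ((∑ π ∈ compat r (τs i), Q i π * Real.log (Q i π) : ℝ) : EReal))) =
      (∑ i, ∑ π ∈ compat r (τs i), nlogTerm (Q i π) (P π θ)) +
        (∑ i, ∑ π ∈ compat r (τs i), nlogTerm (Q i π) (φ π (τs i).1)) +
        ((∑ i, ∑ π ∈ compat r (τs i), Q i π * Real.log (Q i π) : ℝ) : EReal) := by
    intro θ φ
    rw [Finset.sum_add_distrib, Finset.sum_add_distrib, coe_sum]
  have step1 : (∑ i, nlog (∑ π ∈ compat r (τs i), φm1 π (τs i).1 * P π θm1)) ≤
      (∑ i, ∑ π ∈ compat r (τs i), nlogTerm (Q i π) (P π θm1)) +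
        (∑ i, ∑ π ∈ compat r (τs i), nlogTerm (Q i π) (φm1 π (τs i).1)) +
        ((∑ i, ∑ π ∈ compat r (τs i), Q i π * Real.log (Q i π) : ℝ) : EReal) := by
    rw [← hsplit θm1 φm1]
    apply Finset.sum_le_sum
    intro i _
    exact jensen_step (compat r (τs i)) (Q i) (fun π => φm1 π (τs i).1)
      (fun π => P π θm1)
      (fun π hπ => (hφb φm1 hφm1 π _).1) (fun π hπ => (hφb φm1 hφm1 π _).2)
      (fun π hπ => (hPb θm1 π).1) (fun π hπ => (hPb θm1 π).2)
      (hQ0 i) (hQ1 i)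
  have step2 : (∑ i, ∑ π ∈ compat r (τs i), nlogTerm (Q i π) (P π θm)) +
        (∑ i, ∑ π ∈ compat r (τs i), nlogTerm (Q i π) (φm π (τs i).1)) +
        ((∑ i, ∑ π ∈ compat r (τs i), Q i π * Real.log (Q i π) : ℝ) : EReal) =
      ∑ i, nlog (∑ π ∈ compat r (τs i), φm π (τs i).1 * P π θm) := by
    rw [← hsplit θm φm]
    apply Finset.sum_congr rfl
    intro i _
    exact jensen_eq (compat r (τs i)) (Q i) (fun π => φm π (τs i).1)
      (fun π => P π θm)
      (fun π hπ => (hφb φm hφm π _).1) (fun π hπ => (hPb θm π).1)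
      (hpos i) (hQeq i)
  have hθ' := hθ θm
  have hφ' := hφ φm hφm
  unfold Lfull
  calc (∑ i, nlog (∑ π ∈ compat r (τs i), φm1 π (τs i).1 * P π θm1)) +
        ((lam * edgePen r φm1 : ℝ) : EReal)
      ≤ ((∑ i, ∑ π ∈ compat r (τs i), nlogTerm (Q i π) (P π θm1)) +
          (∑ i, ∑ π ∈ compat r (τs i), nlogTerm (Q i π) (φm1 π (τs i).1)) +
          ((∑ i, ∑ π ∈ compat r (τs i), Q i π * Real.log (Q i π) : ℝ) : EReal)) +
          ((lam * edgePen r φm1 : ℝ) : EReal) := add_le_add step1 le_rfl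
    _ = (∑ i, ∑ π ∈ compat r (τs i), nlogTerm (Q i π) (P π θm1)) +
          ((∑ i, ∑ π ∈ compat r (τs i), nlogTerm (Q i π) (φm1 π (τs i).1)) +
            ((lam * edgePen r φm1 : ℝ) : EReal)) +
          ((∑ i, ∑ π ∈ compat r (τs i), Q i π * Real.log (Q i π) : ℝ) : EReal) := by
        abel
    _ ≤ (∑ i, ∑ π ∈ compat r (τs i), nlogTerm (Q i π) (P π θm)) +
          ((∑ i, ∑ π ∈ compat r (τs i), nlogTerm (Q i π) (φm π (τs i).1)) +
            ((lam * edgePen r φm : ℝ) : EReal)) +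
          ((∑ i, ∑ π ∈ compat r (τs i), Q i π * Real.log (Q i π) : ℝ) : EReal) :=
        add_le_add (add_le_add hθ' hφ') le_rfl
    _ = ((∑ i, ∑ π ∈ compat r (τs i), nlogTerm (Q i π) (P π θm)) +
          (∑ i, ∑ π ∈ compat r (τs i), nlogTerm (Q i π) (φm π (τs i).1)) +
          ((∑ i, ∑ π ∈ compat r (τs i), Q i π * Real.log (Q i π) : ℝ) : EReal)) +
          ((lam * edgePen r φm : ℝ) : EReal) := by
        abel
    _ = (∑ i, nlog (∑ π ∈ compat r (τs i), φm π (τs i).1 * P π θm)) +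
          ((lam * edgePen r φm : ℝ) : EReal) := by rw [step2]


end Paper
end
end
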